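/- Let Ω ⊂ ℝⁿ be an open bounded set with the Lebesgue measure, let (X,d) be a locally compact Hadamard space, and let p ∈ [1,∞). Let f ∈ L^p(Ω,X), and let {φ⁽ʲ⁾}_{j∈ℕ} and φ̂ be admissible diffeomorphisms of Ω such that sup_{x∈Ω} |φ⁽ʲ⁾(x) − φ̂(x)| → 0 as j → ∞ and |det Dφ⁽ʲ⁾(x)|⁻¹ ≤ C and |det Dφ̂(x)|⁻¹ ≤ C for all x ∈ Ω, j ∈ ℕ, for some constant C > 0. Then lim_{j→∞} ∫_Ω d(f(φ⁽ʲ⁾(x)), f(φ̂(x)))^p dx = 0. -/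

import Mathlib

open MeasureTheory Set Filter
open scoped ENNReal NNReal Topology

/-- An admissible diffeomorphism of `Ω`: a bijection of `Ω` onto itself which is
continuously differentiable on `Ω` with continuously differentiable inverse. -/
def IsAdmissibleDiffeo {n : ℕ} (Ω : Set (EuclideanSpace ℝ (Fin n)))
    (φ : EuclideanSpace ℝ (Fin n) → EuclideanSpace ℝ (Fin n)) : Prop :=
  Set.BijOn φ Ω Ω ∧ ContDiffOn ℝ 1 φ Ω ∧
    ∃ ψ : EuclideanSpace ℝ (Fin n) → EuclideanSpace ℝ (Fin n),
      (∀ x ∈ Ω, ψ (φ x) = x) ∧ (∀ x ∈ Ω, φ (ψ x) = x) ∧ ContDiffOn ℝ 1 ψ Ω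

namespace CompLpAux

lemma rpow_triple {a b c p : ℝ} (ha : 0 ≤ a) (hb : 0 ≤ b) (hc : 0 ≤ c) (hp : 1 ≤ p) :
    (a + b + c) ^ p ≤ 3 ^ p * (a ^ p + b ^ p + c ^ p) := by
  have hp0 : 0 ≤ p := le_trans zero_le_one hp
  set m := max a (max b c) with hm
  have hma : a ≤ m := le_max_left _ _
  have hmb : b ≤ m := le_trans (le_max_left _ _) (le_max_right _ _)
  have hmc : c ≤ m := le_trans (le_max_right _ _) (le_max_right _ _)
  have hm0 : 0 ≤ m := le_trans ha hma
  have h1 : (a + b + c) ^ p ≤ (3 * m) ^ p :=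
    Real.rpow_le_rpow (by positivity) (by linarith) hp0
  have h2 : (3 * m) ^ p = 3 ^ p * m ^ p := Real.mul_rpow (by norm_num) hm0
  have hmem : m = a ∨ m = b ∨ m = c := by
    rcases max_cases a (max b c) with ⟨h, _⟩ | ⟨h, _⟩
    · exact Or.inl h
    · rcases max_cases b c with ⟨h', _⟩ | ⟨h', _⟩
      · exact Or.inr (Or.inl (h.trans h'))
      · exact Or.inr (Or.inr (h.trans h'))
  have h3 : m ^ p ≤ a ^ p + b ^ p + c ^ p := by
    have h4 := Real.rpow_nonneg ha p
    have h5 := Real.rpow_nonneg hb p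
    have h6 := Real.rpow_nonneg hc p
    rcases hmem with h | h | h <;> rw [h] <;> linarith
  have h7 : (0:ℝ) ≤ 3 ^ p := Real.rpow_nonneg (by norm_num) p
  calc (a + b + c) ^ p ≤ (3 * m) ^ p := h1
    _ = 3 ^ p * m ^ p := h2
    _ ≤ 3 ^ p * (a ^ p + b ^ p + c ^ p) := mul_le_mul_of_nonneg_left h3 h7

lemma exists_dist_eq {X : Type*} [MetricSpace X]
    (hgeo : ∀ x y : X, ∃ γ : ℝ → X, γ 0 = x ∧ γ 1 = y ∧
      ∀ s ∈ Icc (0:ℝ) 1, ∀ t ∈ Icc (0:ℝ) 1, dist (γ s) (γ t) = |s - t| * dist x y)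
    (x y : X) {r : ℝ} (h0 : 0 ≤ r) (hr : r ≤ dist x y) :
    ∃ z : X, dist x z = r ∧ dist z y = dist x y - r := by
  obtain ⟨γ, hγ0, hγ1, hγd⟩ := hgeo x y
  rcases eq_or_lt_of_le (dist_nonneg : (0:ℝ) ≤ dist x y) with hd | hd
  · have hr0 : r = 0 := le_antisymm (hr.trans hd.symm.le) h0
    exact ⟨x, by simp [hr0], by rw [hr0, sub_zero]⟩
  · set d := dist x y with hdd
    set t := r / d with ht
    have ht0 : 0 ≤ t := div_nonneg h0 hd.le
    have ht1 : t ≤ 1 := div_le_one_of_le₀ hr hd.le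
    refine ⟨γ t, ?_, ?_⟩
    · have h := hγd 0 ⟨le_refl 0, zero_le_one⟩ t ⟨ht0, ht1⟩
      rw [hγ0] at h
      rw [h, zero_sub, abs_neg, abs_of_nonneg ht0, ht]
      field_simp
    · have h := hγd t ⟨ht0, ht1⟩ 1 ⟨zero_le_one, le_refl 1⟩
      rw [hγ1] at h
      rw [h, abs_of_nonpos (by linarith), ht]
      field_simp
      ring

lemma isCompact_closedBall_of_geodesic {X : Type*} [MetricSpace X] [CompleteSpace X]
    [LocallyCompactSpace X]
    (hbet : ∀ x y : X, ∀ r : ℝ, 0 ≤ r → r ≤ dist x y →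
      ∃ z, dist x z = r ∧ dist z y = dist x y - r)
    (a : X) (r : ℝ) : IsCompact (Metric.closedBall a r) := by
  set s : Set ℝ := {t | IsCompact (Metric.closedBall a t)} with hs
  have hdc : ∀ t ∈ s, ∀ t' ≤ t, t' ∈ s := fun t ht t' h =>
    ht.of_isClosed_subset Metric.isClosed_closedBall (Metric.closedBall_subset_closedBall h)
  have h0s : (0:ℝ) ∈ s := by
    simp only [hs, mem_setOf_eq, Metric.closedBall_zero]
    exact isCompact_singleton
  have hgrow : ∀ t, 0 ≤ t → t ∈ s → ∃ δ > 0, t + δ ∈ s := by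
    intro t ht0 hts
    have hcpt : IsCompact (Metric.closedBall a t) := hts
    have hex : ∀ y : X, ∃ K : Set X, IsCompact K ∧ K ∈ nhds y := exists_compact_mem_nhds
    choose Ky hKc hKn using hex
    obtain ⟨m, hmb, hmfin, hmsub⟩ := hcpt.elim_finite_subcover_image
      (b := Metric.closedBall a t) (c := fun y => interior (Ky y))
      (fun y _ => isOpen_interior)
      (fun y hy => mem_iUnion₂.2 ⟨y, hy, mem_interior_iff_mem_nhds.2 (hKn y)⟩)
    set N := ⋃ y ∈ m, Ky y with hN
    have hNc : IsCompact N := hmfin.isCompact_biUnion (fun y _ => hKc y)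
    have hUo : IsOpen (⋃ y ∈ m, interior (Ky y)) := isOpen_biUnion (fun y _ => isOpen_interior)
    obtain ⟨δ, hδ0, hδsub⟩ := hcpt.exists_thickening_subset_open hUo hmsub
    refine ⟨δ/2, by linarith, ?_⟩
    have hsubN : Metric.closedBall a (t + δ/2) ⊆ N := by
      intro y hy
      have hy' : dist a y ≤ t + δ/2 := by rwa [Metric.mem_closedBall, dist_comm] at hy
      have hth : y ∈ Metric.thickening δ (Metric.closedBall a t) := by
        by_cases hyt : dist a y ≤ t
        · exact Metric.self_subset_thickening hδ0 _
            (by rw [Metric.mem_closedBall, dist_comm]; exact hyt)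
        · push_neg at hyt
          obtain ⟨z, hz1, hz2⟩ := hbet a y t ht0 hyt.le
          refine Metric.mem_thickening_iff.2 ⟨z, ?_, ?_⟩
          · rw [Metric.mem_closedBall, dist_comm]
            exact hz1.le
          · rw [dist_comm, hz2]
            linarith
      have hmem := hδsub hth
      exact (iUnion₂_mono fun y _ => interior_subset) hmem
    exact hNc.of_isClosed_subset Metric.isClosed_closedBall hsubN
  have hlim : ∀ t, 0 < t → (∀ t', 0 ≤ t' → t' < t → t' ∈ s) → t ∈ s := by
    intro t ht hall
    refine TotallyBounded.isCompact_of_isClosed ?_ Metric.isClosed_closedBall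
    rw [Metric.totallyBounded_iff]
    intro ε hε
    set t' := max 0 (t - ε/3) with ht'
    have ht's : t' ∈ s := by
      rcases le_or_gt (t - ε/3) 0 with h | h
      · rw [ht', max_eq_left h]; exact h0s
      · rw [ht', max_eq_right h.le]; exact hall _ h.le (by linarith)
    obtain ⟨u, huf, hucov⟩ := Metric.totallyBounded_iff.1 ht's.totallyBounded (ε/3) (by linarith)
    refine ⟨u, huf, fun y hy => ?_⟩
    have hy' : dist a y ≤ t := by rwa [Metric.mem_closedBall, dist_comm] at hy
    obtain ⟨w, hw1, hw2⟩ : ∃ w, dist a w ≤ t' ∧ dist w y ≤ ε/3 := by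
      rcases le_or_gt (dist a y) t' with h | h
      · exact ⟨y, h, by rw [dist_self]; linarith⟩
      · obtain ⟨z, hz1, hz2⟩ := hbet a y t' (le_max_left _ _) h.le
        refine ⟨z, hz1.le, ?_⟩
        rw [hz2]
        have h2 : t - ε/3 ≤ t' := le_max_right _ _
        linarith
    have hwmem : w ∈ ⋃ z ∈ u, Metric.ball z (ε/3) :=
      hucov (by rw [Metric.mem_closedBall, dist_comm]; exact hw1)
    obtain ⟨z, hz, hwz⟩ := mem_iUnion₂.1 hwmem
    refine mem_iUnion₂.2 ⟨z, hz, ?_⟩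
    rw [Metric.mem_ball] at hwz ⊢
    calc dist y z ≤ dist y w + dist w z := dist_triangle _ _ _
      _ < ε := by rw [dist_comm y w] at *; linarith
  by_contra hrs
  have hr0 : 0 < r := by
    rcases le_or_gt r 0 with h | h
    · exact absurd (hdc 0 h0s r h) hrs
    · exact h
  set S := s ∩ Icc 0 r with hS
  have hne : S.Nonempty := ⟨0, h0s, le_refl 0, hr0.le⟩
  have hbdd : BddAbove S := ⟨r, fun x hx => hx.2.2⟩
  set R := sSup S with hR
  have hR0 : 0 ≤ R := le_csSup hbdd ⟨h0s, le_refl 0, hr0.le⟩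
  have hRr : R ≤ r := csSup_le hne fun x hx => hx.2.2
  have hRs : R ∈ s := by
    rcases eq_or_lt_of_le hR0 with h | h
    · rw [← h]; exact h0s
    · refine hlim R h fun t' ht'0 ht' => ?_
      obtain ⟨x, hx, hx'⟩ := exists_lt_of_lt_csSup hne ht'
      exact hdc x hx.1 t' hx'.le
  have hRr' : R < r := lt_of_le_of_ne hRr fun h => hrs (h ▸ hRs)
  obtain ⟨δ, hδ0, hδs⟩ := hgrow R hR0 hRs
  have hmem : min (R + δ) r ∈ S :=
    ⟨hdc _ hδs _ (min_le_left _ _), le_min (by linarith) hr0.le, min_le_right _ _⟩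
  have h1 : min (R + δ) r ≤ R := le_csSup hbdd hmem
  have h2 : R < min (R + δ) r := lt_min (by linarith) hRr'
  linarith

lemma properSpace_of_geodesic {X : Type*} [MetricSpace X] [CompleteSpace X]
    [LocallyCompactSpace X]
    (hbet : ∀ x y : X, ∀ r : ℝ, 0 ≤ r → r ≤ dist x y →
      ∃ z, dist x z = r ∧ dist z y = dist x y - r)
    (a : X) : ProperSpace X :=
  ProperSpace.of_seq_closedBall (x := a) (r := fun n : ℕ => (n:ℝ))
    tendsto_natCast_atTop_atTop
    (Filter.Eventually.of_forall fun n => isCompact_closedBall_of_geodesic hbet a n)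

lemma lusin {α X : Type*} [TopologicalSpace α] [MeasurableSpace α] [OpensMeasurableSpace α]
    [T2Space α] {μ : Measure α} [MeasureTheory.Measure.InnerRegularCompactLTTop μ]
    [TopologicalSpace X] [MeasurableSpace X] [OpensMeasurableSpace X] [SecondCountableTopology X]
    {Ω : Set α} (hΩ : MeasurableSet Ω) (hμΩ : μ Ω ≠ ⊤)
    {g : α → X} (hg : Measurable g) {δ : ℝ≥0∞} (hδ : δ ≠ 0) :
    ∃ K, K ⊆ Ω ∧ IsCompact K ∧ ContinuousOn g K ∧ μ (Ω \ K) ≤ δ := by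
  have key : ∀ (T : Set α), MeasurableSet T → T ⊆ Ω → ∀ (e : ℝ≥0∞), e ≠ 0 →
      ∃ K, K ⊆ T ∧ IsCompact K ∧ μ (T \ K) ≤ e := by
    intro T hT hTΩ e he
    have hTμ : μ T ≠ ⊤ := ne_top_of_le_ne_top hμΩ (measure_mono hTΩ)
    obtain ⟨K, hK1, hK2, hK3⟩ := hT.exists_isCompact_lt_add hTμ he
    refine ⟨K, hK1, hK2, ?_⟩
    rw [measure_diff hK1 hK2.measurableSet.nullMeasurableSet
      (ne_top_of_le_ne_top hTμ (measure_mono hK1))]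
    exact tsub_le_iff_left.2 hK3.le
  have hhalf : δ / 2 ≠ 0 := by
    simp only [ne_eq, ENNReal.div_eq_zero_iff, not_or]
    exact ⟨hδ, by norm_num⟩
  obtain ⟨b, hbc, -, hbb⟩ := TopologicalSpace.exists_countable_basis X
  obtain ⟨U, hU⟩ := Set.Countable.exists_eq_range (hbc.insert ∅) (insert_nonempty _ _)
  have hUopen : ∀ i, IsOpen (U i) := by
    intro i
    have h : U i ∈ insert ∅ b := hU ▸ mem_range_self i
    rcases h with h | h
    · rw [h]; exact isOpen_empty
    · exact hbb.isOpen h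
  set A : ℕ → Set α := fun i => Ω ∩ g ⁻¹' (U i) with hA
  have hAm : ∀ i, MeasurableSet (A i) := fun i => hΩ.inter (hg (hUopen i).measurableSet)
  set ε : ℕ → ℝ≥0∞ := fun i => δ / 2 * 2⁻¹ ^ (i + 2) with hε
  have hεpos : ∀ i, ε i ≠ 0 := fun i => mul_ne_zero hhalf (pow_ne_zero _ (by simp))
  choose K1 hK1sub hK1c hK1μ using fun i => key (A i) (hAm i) inter_subset_left (ε i) (hεpos i)
  choose K2 hK2sub hK2c hK2μ using fun i =>
    key (Ω \ A i) (hΩ.diff (hAm i)) diff_subset (ε i) (hεpos i)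
  obtain ⟨K0, hK0sub, hK0c, hK0μ⟩ := key Ω hΩ subset_rfl (δ / 2) hhalf
  refine ⟨K0 ∩ ⋂ i, (K1 i ∪ K2 i), inter_subset_left.trans hK0sub, ?_, ?_, ?_⟩
  · exact hK0c.inter_right (isClosed_iInter fun i => ((hK1c i).union (hK2c i)).isClosed)
  · rw [_root_.continuousOn_iff]
    intro x hx t hto hxt
    obtain ⟨v, hvb, hxv, hvt⟩ := hbb.exists_subset_of_mem_open hxt hto
    obtain ⟨i, hi⟩ : ∃ i, U i = v := by
      have h : v ∈ range U := hU ▸ mem_insert_of_mem _ hvb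
      exact h
    refine ⟨(K2 i)ᶜ, (hK2c i).isClosed.isOpen_compl, ?_, ?_⟩
    · intro hxK2
      have h := hK2sub i hxK2
      exact h.2 ⟨(inter_subset_left.trans hK0sub) hx, by rw [hi]; exact hxv⟩
    · rintro y ⟨hyc, hyK⟩
      have h : y ∈ K1 i ∪ K2 i := (mem_iInter.1 hyK.2) i
      rcases h with h | h
      · have h2 : y ∈ A i := hK1sub i h
        exact hvt (hi ▸ h2.2)
      · exact absurd h hyc
  · have hsub : Ω \ (K0 ∩ ⋂ i, (K1 i ∪ K2 i)) ⊆
        (Ω \ K0) ∪ ⋃ i, (Ω \ (K1 i ∪ K2 i)) := by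
      rintro y ⟨hyΩ, hyK⟩
      by_cases h0 : y ∈ K0
      · have h : ¬ y ∈ ⋂ i, (K1 i ∪ K2 i) := fun h => hyK ⟨h0, h⟩
        obtain ⟨i, hi⟩ := not_forall.1 (fun h' => h (mem_iInter.2 h'))
        exact Or.inr (mem_iUnion.2 ⟨i, hyΩ, hi⟩)
      · exact Or.inl ⟨hyΩ, h0⟩
    have hper : ∀ i, μ (Ω \ (K1 i ∪ K2 i)) ≤ δ / 2 * 2⁻¹ ^ (i + 1) := by
      intro i
      have hsub2 : Ω \ (K1 i ∪ K2 i) ⊆ (A i \ K1 i) ∪ ((Ω \ A i) \ K2 i) := by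
        rintro y ⟨hyΩ, hyK⟩
        by_cases hA' : y ∈ A i
        · exact Or.inl ⟨hA', fun h => hyK (Or.inl h)⟩
        · exact Or.inr ⟨⟨hyΩ, hA'⟩, fun h => hyK (Or.inr h)⟩
      calc μ (Ω \ (K1 i ∪ K2 i)) ≤ μ ((A i \ K1 i) ∪ ((Ω \ A i) \ K2 i)) :=
            measure_mono hsub2
        _ ≤ μ (A i \ K1 i) + μ ((Ω \ A i) \ K2 i) := measure_union_le _ _
        _ ≤ ε i + ε i := add_le_add (hK1μ i) (hK2μ i)
        _ = δ / 2 * 2⁻¹ ^ (i + 1) := by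
            rw [hε, ← two_mul]
            have h1 : (2:ℝ≥0∞) * (δ / 2 * 2⁻¹ ^ (i + 2)) = δ / 2 * (2 * 2⁻¹ ^ (i + 2)) := by ring
            rw [h1]
            congr 1
            rw [show i + 2 = (i + 1) + 1 from rfl, pow_succ,
              mul_comm ((2:ℝ≥0∞)⁻¹ ^ (i + 1)) _, ← mul_assoc,
              ENNReal.mul_inv_cancel (by norm_num) (by norm_num), one_mul]
    have hsum : ∑' i : ℕ, (2⁻¹ : ℝ≥0∞) ^ (i + 1) = 1 := by
      simp_rw [pow_succ]
      rw [ENNReal.tsum_mul_right, ENNReal.tsum_geometric, ENNReal.one_sub_inv_two, inv_inv]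
      exact ENNReal.mul_inv_cancel (by norm_num) (by norm_num)
    calc μ (Ω \ (K0 ∩ ⋂ i, (K1 i ∪ K2 i)))
        ≤ μ ((Ω \ K0) ∪ ⋃ i, (Ω \ (K1 i ∪ K2 i))) := measure_mono hsub
      _ ≤ μ (Ω \ K0) + μ (⋃ i, (Ω \ (K1 i ∪ K2 i))) := measure_union_le _ _
      _ ≤ δ / 2 + ∑' i, μ (Ω \ (K1 i ∪ K2 i)) := add_le_add hK0μ (measure_iUnion_le _)
      _ ≤ δ / 2 + ∑' i, (δ / 2 * 2⁻¹ ^ (i + 1)) := add_le_add le_rfl (ENNReal.tsum_le_tsum hper)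
      _ = δ / 2 + δ / 2 * ∑' i : ℕ, (2⁻¹ : ℝ≥0∞) ^ (i + 1) := by rw [ENNReal.tsum_mul_left]
      _ = δ := by rw [hsum, mul_one, ENNReal.add_halves]

lemma det_fderiv_ne_zero {n : ℕ} {Ω : Set (EuclideanSpace ℝ (Fin n))} (hΩo : IsOpen Ω)
    {φ : EuclideanSpace ℝ (Fin n) → EuclideanSpace ℝ (Fin n)}
    (hφ : IsAdmissibleDiffeo Ω φ) {x : EuclideanSpace ℝ (Fin n)} (hx : x ∈ Ω) :
    (fderiv ℝ φ x).det ≠ 0 := by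
  obtain ⟨hbij, hcd, ψ, hψφ, hφψ, hcdψ⟩ := hφ
  have hφx : φ x ∈ Ω := hbij.mapsTo hx
  have hdφ : HasFDerivAt φ (fderiv ℝ φ x) x :=
    ((hcd.differentiableOn one_ne_zero).differentiableAt (hΩo.mem_nhds hx)).hasFDerivAt
  have hdψ : HasFDerivAt ψ (fderiv ℝ ψ (φ x)) (φ x) :=
    ((hcdψ.differentiableOn one_ne_zero).differentiableAt (hΩo.mem_nhds hφx)).hasFDerivAt
  have hcomp : HasFDerivAt (ψ ∘ φ) ((fderiv ℝ ψ (φ x)).comp (fderiv ℝ φ x)) x :=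
    hdψ.comp x hdφ
  have hid : HasFDerivAt (ψ ∘ φ) (ContinuousLinearMap.id ℝ (EuclideanSpace ℝ (Fin n))) x := by
    have heq : (ψ ∘ φ) =ᶠ[nhds x] id := by
      filter_upwards [hΩo.mem_nhds hx] with y hy
      exact hψφ y hy
    exact (hasFDerivAt_id x).congr_of_eventuallyEq heq
  have h1 : (fderiv ℝ ψ (φ x)).comp (fderiv ℝ φ x) =
      ContinuousLinearMap.id ℝ (EuclideanSpace ℝ (Fin n)) := hcomp.unique hid
  have h2 : (fderiv ℝ ψ (φ x)).det * (fderiv ℝ φ x).det = 1 := by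
    have h3 := congrArg ContinuousLinearMap.det h1
    have h6 : ((fderiv ℝ ψ (φ x)).comp (fderiv ℝ φ x)).det =
        (fderiv ℝ ψ (φ x)).det * (fderiv ℝ φ x).det := LinearMap.det_comp _ _
    rw [h6] at h3
    simpa only [ContinuousLinearMap.det, ContinuousLinearMap.coe_comp, LinearMap.det_comp,
      ContinuousLinearMap.coe_id, LinearMap.det_id] using h3
  exact right_ne_zero_of_mul_eq_one h2

lemma lintegral_comp_le {n : ℕ} {Ω : Set (EuclideanSpace ℝ (Fin n))} (hΩo : IsOpen Ω)
    {φ : EuclideanSpace ℝ (Fin n) → EuclideanSpace ℝ (Fin n)}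
    (hφ : IsAdmissibleDiffeo Ω φ) {C : ℝ} (hC : 0 < C)
    (hdet : ∀ x ∈ Ω, |(fderiv ℝ φ x).det|⁻¹ ≤ C)
    {S : Set (EuclideanSpace ℝ (Fin n))} (hS : MeasurableSet S) (hSΩ : S ⊆ Ω)
    (g : EuclideanSpace ℝ (Fin n) → ℝ≥0∞) :
    ∫⁻ x in S, g (φ x) ≤ ENNReal.ofReal C * ∫⁻ y in φ '' S, g y := by
  have hder : ∀ x ∈ S, HasFDerivWithinAt φ (fderiv ℝ φ x) S x := fun x hx =>
    (((hφ.2.1.differentiableOn one_ne_zero).differentiableAt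
      (hΩo.mem_nhds (hSΩ hx))).hasFDerivAt).hasFDerivWithinAt
  rw [lintegral_image_eq_lintegral_abs_det_fderiv_mul volume hS hder (hφ.1.injOn.mono hSΩ) g]
  rw [← lintegral_const_mul' _ _ ENNReal.ofReal_ne_top]
  refine setLIntegral_mono' hS fun x hx => ?_
  have hne := det_fderiv_ne_zero hΩo hφ (hSΩ hx)
  have habs : 0 < |(fderiv ℝ φ x).det| := abs_pos.2 hne
  have h1 : (1:ℝ) ≤ C * |(fderiv ℝ φ x).det| := by
    have h := mul_le_mul_of_nonneg_right (hdet x (hSΩ hx)) (abs_nonneg ((fderiv ℝ φ x).det))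
    rwa [inv_mul_cancel₀ habs.ne'] at h
  have h2 : (1:ℝ≥0∞) ≤ ENNReal.ofReal C * ENNReal.ofReal |(fderiv ℝ φ x).det| := by
    rw [← ENNReal.ofReal_mul hC.le, ← ENNReal.ofReal_one]
    exact ENNReal.ofReal_le_ofReal h1
  calc g (φ x) = 1 * g (φ x) := (one_mul _).symm
    _ ≤ (ENNReal.ofReal C * ENNReal.ofReal |(fderiv ℝ φ x).det|) * g (φ x) :=
        mul_le_mul_left h2 _
    _ = ENNReal.ofReal C * (ENNReal.ofReal |(fderiv ℝ φ x).det| * g (φ x)) := mul_assoc _ _ _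

lemma measure_preimage_le {n : ℕ} {Ω : Set (EuclideanSpace ℝ (Fin n))} (hΩo : IsOpen Ω)
    {φ : EuclideanSpace ℝ (Fin n) → EuclideanSpace ℝ (Fin n)}
    (hφ : IsAdmissibleDiffeo Ω φ) {C : ℝ} (hC : 0 < C)
    (hdet : ∀ x ∈ Ω, |(fderiv ℝ φ x).det|⁻¹ ≤ C)
    {T : Set (EuclideanSpace ℝ (Fin n))} (hTo : IsOpen T) :
    volume (Ω ∩ φ ⁻¹' T) ≤ ENNReal.ofReal C * volume T := by
  have hSo : IsOpen (Ω ∩ φ ⁻¹' T) := (hφ.2.1.continuousOn).isOpen_inter_preimage hΩo hTo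
  have h := lintegral_comp_le hΩo hφ hC hdet hSo.measurableSet inter_subset_left
    (T.indicator 1)
  have hL : ∫⁻ x in Ω ∩ φ ⁻¹' T, T.indicator 1 (φ x) = volume (Ω ∩ φ ⁻¹' T) := by
    have h1 : ∀ x ∈ Ω ∩ φ ⁻¹' T, T.indicator (1 : EuclideanSpace ℝ (Fin n) → ℝ≥0∞) (φ x) = 1 := fun x hx =>
      indicator_of_mem (show φ x ∈ T from hx.2) _
    rw [setLIntegral_congr_fun hSo.measurableSet (fun x hx => h1 x hx), setLIntegral_one]
  have hR : ∫⁻ y in φ '' (Ω ∩ φ ⁻¹' T), T.indicator 1 y ≤ volume T := by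
    calc ∫⁻ y in φ '' (Ω ∩ φ ⁻¹' T), T.indicator 1 y
        ≤ ∫⁻ y, T.indicator 1 y := setLIntegral_le_lintegral _ _
      _ = volume T := lintegral_indicator_one hTo.measurableSet
  rw [hL] at h
  exact h.trans (mul_le_mul_right hR _)

end CompLpAux

open CompLpAux

set_option maxHeartbeats 1000000

/-- If `f ∈ L^p(Ω, X)` for a locally compact Hadamard space `X`, and
admissible diffeomorphisms `φ⁽ʲ⁾` converge uniformly on `Ω` to an admissible
diffeomorphism `φ̂`, with `|det Dφ⁽ʲ⁾|⁻¹ ≤ C` and `|det Dφ̂|⁻¹ ≤ C`, then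
`∫_Ω d(f∘φ⁽ʲ⁾, f∘φ̂)^p → 0`. -/
theorem comp_converges_in_Lp_of_uniform_convergence
    {n : ℕ} (hn : 1 ≤ n)
    (Ω : Set (EuclideanSpace ℝ (Fin n))) (hΩo : IsOpen Ω) (hΩb : Bornology.IsBounded Ω)
    {X : Type*} [MetricSpace X] [CompleteSpace X] [LocallyCompactSpace X]
    [MeasurableSpace X] [BorelSpace X]
    (hgeo : ∀ x y : X, ∃ γ : ℝ → X, γ 0 = x ∧ γ 1 = y ∧
      ∀ s ∈ Icc (0:ℝ) 1, ∀ t ∈ Icc (0:ℝ) 1, dist (γ s) (γ t) = |s - t| * dist x y)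
    (h4 : ∀ x y v w : X, dist x v ^ 2 + dist y w ^ 2 ≤
      dist x w ^ 2 + dist y v ^ 2 + 2 * dist x y * dist v w)
    (p : ℝ) (hp : 1 ≤ p)
    (f : EuclideanSpace ℝ (Fin n) → X) (hf : Measurable f)
    (a : X) (hfa : ∫⁻ ω in Ω, ENNReal.ofReal (dist (f ω) a ^ p) < ⊤)
    (φ : ℕ → EuclideanSpace ℝ (Fin n) → EuclideanSpace ℝ (Fin n))
    (φhat : EuclideanSpace ℝ (Fin n) → EuclideanSpace ℝ (Fin n))
    (hφ : ∀ j, IsAdmissibleDiffeo Ω (φ j)) (hφhat : IsAdmissibleDiffeo Ω φhat)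
    (hconv : TendstoUniformlyOn φ φhat atTop Ω)
    (C : ℝ) (hC : 0 < C)
    (hdet : ∀ j, ∀ x ∈ Ω, |(fderiv ℝ (φ j) x).det|⁻¹ ≤ C)
    (hdethat : ∀ x ∈ Ω, |(fderiv ℝ φhat x).det|⁻¹ ≤ C) :
    Tendsto (fun j => ∫⁻ x in Ω, ENNReal.ofReal (dist (f (φ j x)) (f (φhat x)) ^ p))
      atTop (nhds 0) := by
  classical
  have hΩm : MeasurableSet Ω := hΩo.measurableSet
  have hμΩ : volume Ω < ⊤ := hΩb.measure_lt_top
  have hp0 : 0 < p := lt_of_lt_of_le one_pos hp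
  have hbet : ∀ x y : X, ∀ r : ℝ, 0 ≤ r → r ≤ dist x y →
      ∃ z, dist x z = r ∧ dist z y = dist x y - r :=
    fun x y r h0 hr => exists_dist_eq hgeo x y h0 hr
  haveI : ProperSpace X := properSpace_of_geodesic hbet a
  haveI : SecondCountableTopology X := secondCountable_of_proper
  rw [ENNReal.tendsto_atTop_zero]
  intro ε hε
  -- real-valued target
  have hεne : min ε 1 ≠ 0 := (lt_min hε zero_lt_one).ne'
  have hεtop : min ε 1 ≠ ⊤ := ((min_le_right _ _).trans_lt ENNReal.one_lt_top).ne
  set r : ℝ := (min ε 1).toReal with hrdef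
  have hrpos : 0 < r := ENNReal.toReal_pos hεne hεtop
  have hrle : ENNReal.ofReal r ≤ ε := by
    rw [hrdef, ENNReal.ofReal_toReal hεtop]
    exact min_le_left _ _
  have h3p : (0:ℝ) < 3 ^ p := Real.rpow_pos_of_pos (by norm_num) p
  set r' : ℝ := r / (3 ^ p * 4) with hr'def
  have hr'pos : 0 < r' := div_pos hrpos (by positivity)
  -- Step 1 : truncation of f
  set h₀ : EuclideanSpace ℝ (Fin n) → ℝ≥0∞ := fun y => ENNReal.ofReal (dist (f y) a ^ p)
    with hh₀
  have hdista : Measurable fun y => dist (f y) a := hf.dist measurable_const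
  have hh₀m : Measurable h₀ :=
    ((Real.continuous_rpow_const hp0.le).measurable.comp hdista).ennreal_ofReal
  set Sm : ℕ → Set (EuclideanSpace ℝ (Fin n)) :=
    fun m => Ω ∩ {y | (m:ℝ) < dist (f y) a} with hSmdef
  have hSmm : ∀ m, MeasurableSet (Sm m) := fun m =>
    hΩm.inter (hdista measurableSet_Ioi)
  set ν := (volume.restrict Ω).withDensity h₀ with hν
  have hνtot : ν univ ≠ ⊤ := by
    rw [hν, withDensity_apply _ MeasurableSet.univ, Measure.restrict_univ]
    exact hfa.ne
  have htend : Tendsto (fun m => ν (Sm m)) atTop (nhds 0) := by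
    have h1 : Tendsto (ν ∘ Sm) atTop (nhds (ν (⋂ m, Sm m))) :=
      tendsto_measure_iInter_atTop (fun m => (hSmm m).nullMeasurableSet)
        (fun m m' h => inter_subset_inter_right _ fun y hy =>
          lt_of_le_of_lt ((Nat.cast_le (α := ℝ)).2 h) hy)
        ⟨0, ne_top_of_le_ne_top hνtot (measure_mono (subset_univ _))⟩
    have h2 : (⋂ m, Sm m) = ∅ := by
      ext y
      simp only [mem_iInter, mem_empty_iff_false, iff_false, not_forall]
      obtain ⟨m, hm⟩ := exists_nat_gt (dist (f y) a)
      exact ⟨m, fun h => absurd h.2 (not_lt.2 hm.le)⟩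
    rwa [h2, measure_empty] at h1
  have hrC : (0:ℝ≥0∞) < ENNReal.ofReal (r' / (C + 1)) :=
    ENNReal.ofReal_pos.2 (by positivity)
  obtain ⟨m0, hm0⟩ := (htend.eventually_lt_const hrC).exists
  set M : ℝ := (m0 : ℝ) with hM
  have hM0 : (0:ℝ) ≤ M := Nat.cast_nonneg m0
  set g : EuclideanSpace ℝ (Fin n) → X := fun y => if dist (f y) a ≤ M then f y else a with hgdef
  have hgm : Measurable g :=
    Measurable.ite (measurableSet_le hdista measurable_const) hf measurable_const
  have hgbd : ∀ y, dist (g y) a ≤ M := by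
    intro y
    rw [hgdef]
    dsimp only
    split
    · assumption
    · simp [hM0]
  have hfg : ∫⁻ y in Ω, ENNReal.ofReal (dist (f y) (g y) ^ p) ≤ ENNReal.ofReal (r' / (C + 1)) := by
    refine le_trans ?_ hm0.le
    have hpt : ∀ y ∈ Ω, ENNReal.ofReal (dist (f y) (g y) ^ p) ≤ (Sm m0).indicator h₀ y := by
      intro y hy
      by_cases hd : dist (f y) a ≤ M
      · simp [hgdef, hd, Real.zero_rpow hp0.ne']
      · have hind : (Sm m0).indicator h₀ y = h₀ y :=
          indicator_of_mem (show y ∈ Sm m0 from ⟨hy, not_le.1 hd⟩) h₀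
        rw [hgdef]
        dsimp only
        rw [if_neg hd, hind]
    calc ∫⁻ y in Ω, ENNReal.ofReal (dist (f y) (g y) ^ p)
        ≤ ∫⁻ y in Ω, (Sm m0).indicator h₀ y := setLIntegral_mono (hh₀m.indicator (hSmm m0)) hpt
      _ = ∫⁻ y in Sm m0, h₀ y ∂(volume.restrict Ω) := lintegral_indicator (hSmm m0) _
      _ = ν (Sm m0) := (withDensity_apply _ (hSmm m0)).symm
  have hfg' : ∫⁻ y in Ω, ENNReal.ofReal (dist (g y) (f y) ^ p) ≤
      ENNReal.ofReal (r' / (C + 1)) := by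
    simpa only [dist_comm] using hfg
  -- Step 2 : Lusin
  have hq0 : (0:ℝ) ≤ (2*M) ^ p := Real.rpow_nonneg (by linarith) p
  set δ3 : ℝ := r' / ((2*M) ^ p * 2 * C + 1) with hδ3
  have hδ3pos : 0 < δ3 := div_pos hr'pos (by positivity)
  obtain ⟨K, hKΩ, hKc, hKcont, hKμ⟩ := lusin (μ := volume) hΩm hμΩ.ne hgm
    (δ := ENNReal.ofReal δ3) (ENNReal.ofReal_pos.2 hδ3pos).ne'
  -- Step 3 : uniform continuity on K
  set t : ℝ := (volume Ω).toReal with htdef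
  have ht0 : 0 ≤ t := ENNReal.toReal_nonneg
  set ε₂ : ℝ := (r' / (t + 1)) ^ (1/p) with hε₂
  have hε₂pos : 0 < ε₂ := Real.rpow_pos_of_pos (by positivity) _
  have hε₂p : ε₂ ^ p = r' / (t + 1) := by
    rw [hε₂, ← Real.rpow_mul (by positivity), one_div, inv_mul_cancel₀ hp0.ne', Real.rpow_one]
  obtain ⟨δK, hδK0, hδK⟩ := Metric.uniformContinuousOn_iff.1
    (hKc.uniformContinuousOn_of_continuous hKcont) ε₂ hε₂pos
  -- Step 4 : uniform convergence
  obtain ⟨N, hN⟩ := eventually_atTop.1 (Metric.tendstoUniformlyOn_iff.1 hconv δK hδK0)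
  refine ⟨N, fun j hj => ?_⟩
  -- per-j sets
  set T : Set (EuclideanSpace ℝ (Fin n)) := Ω \ K with hT
  have hTo : IsOpen T := hΩo.sdiff hKc.isClosed
  set B1 : Set (EuclideanSpace ℝ (Fin n)) := Ω ∩ φ j ⁻¹' T with hB1
  set B2 : Set (EuclideanSpace ℝ (Fin n)) := Ω ∩ φhat ⁻¹' T with hB2
  have hB1o : IsOpen B1 := ((hφ j).2.1.continuousOn).isOpen_inter_preimage hΩo hTo
  have hB2o : IsOpen B2 := (hφhat.2.1.continuousOn).isOpen_inter_preimage hΩo hTo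
  set B := B1 ∪ B2 with hB
  set A := Ω \ B with hA
  have hAm : MeasurableSet A := hΩm.diff (hB1o.union hB2o).measurableSet
  have hμB : volume B ≤ 2 * ENNReal.ofReal C * ENNReal.ofReal δ3 := by
    calc volume B ≤ volume B1 + volume B2 := measure_union_le _ _
      _ ≤ ENNReal.ofReal C * volume T + ENNReal.ofReal C * volume T :=
          add_le_add (measure_preimage_le hΩo (hφ j) hC (hdet j) hTo)
            (measure_preimage_le hΩo hφhat hC hdethat hTo)
      _ = 2 * ENNReal.ofReal C * volume T := by ring
      _ ≤ 2 * ENNReal.ofReal C * ENNReal.ofReal δ3 := mul_le_mul_right hKμ _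
  -- the three functions
  set u1 : EuclideanSpace ℝ (Fin n) → ℝ≥0∞ :=
    fun x => ENNReal.ofReal (dist (f (φ j x)) (g (φ j x)) ^ p) with hu1def
  set u2 : EuclideanSpace ℝ (Fin n) → ℝ≥0∞ :=
    fun x => ENNReal.ofReal (dist (g (φ j x)) (g (φhat x)) ^ p) with hu2def
  set u3 : EuclideanSpace ℝ (Fin n) → ℝ≥0∞ :=
    fun x => ENNReal.ofReal (dist (g (φhat x)) (f (φhat x)) ^ p) with hu3def
  have hptwise : ∀ x, ENNReal.ofReal (dist (f (φ j x)) (f (φhat x)) ^ p) ≤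
      ENNReal.ofReal (3 ^ p) * (u1 x + u2 x + u3 x) := by
    intro x
    have htri : dist (f (φ j x)) (f (φhat x)) ≤
        dist (f (φ j x)) (g (φ j x)) + dist (g (φ j x)) (g (φhat x)) +
          dist (g (φhat x)) (f (φhat x)) := dist_triangle4 _ _ _ _
    calc ENNReal.ofReal (dist (f (φ j x)) (f (φhat x)) ^ p)
        ≤ ENNReal.ofReal ((dist (f (φ j x)) (g (φ j x)) + dist (g (φ j x)) (g (φhat x)) +
            dist (g (φhat x)) (f (φhat x))) ^ p) :=
          ENNReal.ofReal_le_ofReal (Real.rpow_le_rpow dist_nonneg htri hp0.le)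
      _ ≤ ENNReal.ofReal (3 ^ p * (dist (f (φ j x)) (g (φ j x)) ^ p +
            dist (g (φ j x)) (g (φhat x)) ^ p + dist (g (φhat x)) (f (φhat x)) ^ p)) :=
          ENNReal.ofReal_le_ofReal (rpow_triple dist_nonneg dist_nonneg dist_nonneg hp)
      _ = ENNReal.ofReal (3 ^ p) * (u1 x + u2 x + u3 x) := by
          rw [ENNReal.ofReal_mul h3p.le,
            ENNReal.ofReal_add (add_nonneg (Real.rpow_nonneg dist_nonneg _)
              (Real.rpow_nonneg dist_nonneg _)) (Real.rpow_nonneg dist_nonneg _),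
            ENNReal.ofReal_add (Real.rpow_nonneg dist_nonneg _)
              (Real.rpow_nonneg dist_nonneg _)]
  -- measurability
  have hφjae : AEMeasurable (φ j) (volume.restrict Ω) :=
    ((hφ j).2.1.continuousOn).aemeasurable hΩm
  have hφhae : AEMeasurable φhat (volume.restrict Ω) := (hφhat.2.1.continuousOn).aemeasurable hΩm
  have hdfg : Measurable fun y => ENNReal.ofReal (dist (f y) (g y) ^ p) :=
    ((Real.continuous_rpow_const hp0.le).measurable.comp (hf.dist hgm)).ennreal_ofReal
  have hdgf : Measurable fun y => ENNReal.ofReal (dist (g y) (f y) ^ p) :=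
    ((Real.continuous_rpow_const hp0.le).measurable.comp (hgm.dist hf)).ennreal_ofReal
  have hu1 : AEMeasurable u1 (volume.restrict Ω) := hdfg.comp_aemeasurable hφjae
  have hu2 : AEMeasurable u2 (volume.restrict Ω) := by
    have hd : AEMeasurable (fun x => dist (g (φ j x)) (g (φhat x))) (volume.restrict Ω) :=
      measurable_dist.comp_aemeasurable
        ((hgm.comp_aemeasurable hφjae).prodMk (hgm.comp_aemeasurable hφhae))
    exact ((Real.continuous_rpow_const hp0.le).measurable.comp_aemeasurable hd).ennreal_ofReal
  -- bounds on the three integrals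
  have hCr : ENNReal.ofReal C * ENNReal.ofReal (r' / (C + 1)) ≤ ENNReal.ofReal r' := by
    rw [← ENNReal.ofReal_mul hC.le]
    refine ENNReal.ofReal_le_ofReal ?_
    have h1 : C * (r' / (C + 1)) = r' * (C / (C + 1)) := by ring
    rw [h1]
    have h2 : C / (C + 1) ≤ 1 := div_le_one_of_le₀ (by linarith) (by linarith)
    calc r' * (C / (C + 1)) ≤ r' * 1 := mul_le_mul_of_nonneg_left h2 hr'pos.le
      _ = r' := mul_one _
  have hU : ∫⁻ x in Ω, u1 x ≤ ENNReal.ofReal r' := by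
    have h := lintegral_comp_le hΩo (hφ j) hC (hdet j) hΩm subset_rfl
      (fun y => ENNReal.ofReal (dist (f y) (g y) ^ p))
    rw [(hφ j).1.image_eq] at h
    exact h.trans ((mul_le_mul_right hfg _).trans hCr)
  have hW : ∫⁻ x in Ω, u3 x ≤ ENNReal.ofReal r' := by
    have h := lintegral_comp_le hΩo hφhat hC hdethat hΩm subset_rfl
      (fun y => ENNReal.ofReal (dist (g y) (f y) ^ p))
    rw [hφhat.1.image_eq] at h
    exact h.trans ((mul_le_mul_right hfg' _).trans hCr)
  have hV : ∫⁻ x in Ω, u2 x ≤ ENNReal.ofReal r' + ENNReal.ofReal r' := by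
    have hsplit : ∫⁻ x in Ω, u2 x ≤ (∫⁻ x in A, u2 x) + ∫⁻ x in B, u2 x := by
      have hle : volume.restrict Ω ≤ volume.restrict A + volume.restrict B := by
        have hΩAB : Ω ⊆ A ∪ B := fun x hx =>
          (em (x ∈ B)).elim (fun h => Or.inr h) (fun h => Or.inl ⟨hx, h⟩)
        calc volume.restrict Ω ≤ volume.restrict (A ∪ B) := Measure.restrict_mono hΩAB le_rfl
          _ ≤ volume.restrict A + volume.restrict B := Measure.restrict_union_le _ _
      calc ∫⁻ x in Ω, u2 x ≤ ∫⁻ x, u2 x ∂(volume.restrict A + volume.restrict B) :=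
            lintegral_mono' hle le_rfl
        _ = (∫⁻ x in A, u2 x) + ∫⁻ x in B, u2 x := lintegral_add_measure _ _ _
    have hAint : ∫⁻ x in A, u2 x ≤ ENNReal.ofReal r' := by
      have hAbound : ∀ x ∈ A, u2 x ≤ ENNReal.ofReal (ε₂ ^ p) := by
        intro x hx
        obtain ⟨hxΩ, hxB⟩ := hx
        have hx1 : φ j x ∈ K := by
          have h1 : φ j x ∈ Ω := (hφ j).1.mapsTo hxΩ
          by_contra hk
          exact hxB (Or.inl ⟨hxΩ, ⟨h1, hk⟩⟩)
        have hx2 : φhat x ∈ K := by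
          have h1 : φhat x ∈ Ω := hφhat.1.mapsTo hxΩ
          by_contra hk
          exact hxB (Or.inr ⟨hxΩ, ⟨h1, hk⟩⟩)
        have hd : dist (φ j x) (φhat x) < δK := by
          have h := hN j hj x hxΩ
          rwa [dist_comm] at h
        have h := hδK _ hx1 _ hx2 hd
        exact ENNReal.ofReal_le_ofReal (Real.rpow_le_rpow dist_nonneg h.le hp0.le)
      calc ∫⁻ x in A, u2 x ≤ ∫⁻ _x in A, ENNReal.ofReal (ε₂ ^ p) :=
            setLIntegral_mono measurable_const hAbound
        _ = ENNReal.ofReal (ε₂ ^ p) * volume A := setLIntegral_const _ _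
        _ ≤ ENNReal.ofReal (ε₂ ^ p) * volume Ω :=
            mul_le_mul_right (measure_mono diff_subset) _
        _ ≤ ENNReal.ofReal r' := by
            rw [show volume Ω = ENNReal.ofReal t from (ENNReal.ofReal_toReal hμΩ.ne).symm,
              ← ENNReal.ofReal_mul (by positivity)]
            refine ENNReal.ofReal_le_ofReal ?_
            rw [hε₂p, div_mul_eq_mul_div, div_le_iff₀ (by linarith)]
            nlinarith
    have hBint : ∫⁻ x in B, u2 x ≤ ENNReal.ofReal r' := by
      have hBbound : ∀ x, u2 x ≤ ENNReal.ofReal ((2*M) ^ p) := by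
        intro x
        have hd : dist (g (φ j x)) (g (φhat x)) ≤ 2 * M := by
          calc dist (g (φ j x)) (g (φhat x))
              ≤ dist (g (φ j x)) a + dist a (g (φhat x)) := dist_triangle _ _ _
            _ ≤ M + M := add_le_add (hgbd _) (by rw [dist_comm]; exact hgbd _)
            _ = 2 * M := by ring
        exact ENNReal.ofReal_le_ofReal (Real.rpow_le_rpow dist_nonneg hd hp0.le)
      calc ∫⁻ x in B, u2 x ≤ ∫⁻ _x in B, ENNReal.ofReal ((2*M) ^ p) :=
            setLIntegral_mono measurable_const fun x _ => hBbound x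
        _ = ENNReal.ofReal ((2*M) ^ p) * volume B := setLIntegral_const _ _
        _ ≤ ENNReal.ofReal ((2*M) ^ p) * (2 * ENNReal.ofReal C * ENNReal.ofReal δ3) :=
            mul_le_mul_right hμB _
        _ ≤ ENNReal.ofReal r' := by
            rw [show (2:ℝ≥0∞) = ENNReal.ofReal 2 from (ENNReal.ofReal_ofNat 2).symm,
              ← ENNReal.ofReal_mul (by norm_num), ← ENNReal.ofReal_mul (by positivity),
              ← ENNReal.ofReal_mul hq0]
            refine ENNReal.ofReal_le_ofReal ?_
            have hq1 : (0:ℝ) < (2*M)^p * 2 * C + 1 := by positivity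
            have h2 : (2*M)^p * (2 * C * δ3) = r' * (((2*M)^p * 2 * C) / ((2*M)^p * 2 * C + 1)) := by
              rw [hδ3]; field_simp
            have h3 : ((2*M)^p * 2 * C) / ((2*M)^p * 2 * C + 1) ≤ 1 :=
              div_le_one_of_le₀ (by linarith) (by linarith)
            calc (2*M)^p * (2 * C * δ3)
                = r' * (((2*M)^p * 2 * C) / ((2*M)^p * 2 * C + 1)) := h2
              _ ≤ r' * 1 := mul_le_mul_of_nonneg_left h3 hr'pos.le
              _ = r' := mul_one _
    exact hsplit.trans (add_le_add hAint hBint)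
  -- final assembly
  calc ∫⁻ x in Ω, ENNReal.ofReal (dist (f (φ j x)) (f (φhat x)) ^ p)
      ≤ ∫⁻ x in Ω, ENNReal.ofReal (3 ^ p) * (u1 x + u2 x + u3 x) := lintegral_mono hptwise
    _ = ENNReal.ofReal (3 ^ p) * ∫⁻ x in Ω, (u1 x + u2 x + u3 x) :=
        lintegral_const_mul' _ _ ENNReal.ofReal_ne_top
    _ = ENNReal.ofReal (3 ^ p) *
        (((∫⁻ x in Ω, u1 x) + ∫⁻ x in Ω, u2 x) + ∫⁻ x in Ω, u3 x) := by
        rw [lintegral_add_left' (f := fun x => u1 x + u2 x) (hu1.add hu2), lintegral_add_left' hu1]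
    _ ≤ ENNReal.ofReal (3 ^ p) *
        ((ENNReal.ofReal r' + (ENNReal.ofReal r' + ENNReal.ofReal r')) + ENNReal.ofReal r') :=
        mul_le_mul_right (add_le_add (add_le_add hU hV) hW) _
    _ = ENNReal.ofReal (3 ^ p) * (4 * ENNReal.ofReal r') := by ring
    _ = ENNReal.ofReal r := by
        rw [show (4:ℝ≥0∞) = ENNReal.ofReal 4 from (ENNReal.ofReal_ofNat 4).symm,
          ← ENNReal.ofReal_mul (by norm_num), ← ENNReal.ofReal_mul h3p.le, hr'def]
        congr 1
        field_simp
    _ ≤ ε := hrle
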